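/- arXiv:0809.1395 — 3 statements merged into one kernel-verified Lean document; each statement's English description precedes it below -/
import Mathlib

section
/- For all m = (m1, m2), n = (n1, n2) ∈ N^2, π(u_{m,n}) ≡ m1·n2 − m2·n1 (mod p), where u_{m,n} = −σ1^{m1}·(Σ_{j=0}^{n1−1} Σ_{i=0}^{m2−1} σ1^i σ2^j)·u12 + σ1^{n1}·(Σ_{j=0}^{n2−1} Σ_{i=0}^{m1−1} σ1^i σ2^j)·u12 ∈ A_2(G12). -/
open MonoidAlgebra

set_option maxHeartbeats 1000000
set_option synthInstance.maxHeartbeats 400000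

noncomputable section

/-! ## Generic (unbundled) group-cohomology notions in low degree -/

/-- `f : G → A` is a 1-cocycle for the (unbundled) action `act`. -/
def IsOneCocycle {G : Type*} [Group G] {A : Type*} [AddCommGroup A]
    (act : G → A → A) (f : G → A) : Prop :=
  ∀ g h : G, f (g * h) = act g (f h) + f g

/-- `f : G → A` is a 1-coboundary for the (unbundled) action `act`. -/
def IsOneCoboundary {G : Type*} [Group G] {A : Type*} [AddCommGroup A]
    (act : G → A → A) (f : G → A) : Prop :=
  ∃ a : A, ∀ g : G, f g = act g a - a

/-- `f : G → G → A` is a 2-coboundary for the (unbundled) action `act`. -/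
def IsTwoCoboundary {G : Type*} [Group G] {A : Type*} [AddCommGroup A]
    (act : G → A → A) (f : G → G → A) : Prop :=
  ∃ c : G → A, ∀ g h : G, f g h = act g (c h) - c (g * h) + c g

/-- restriction of an (unbundled) action to a subgroup. -/
def resAct {G : Type*} [Group G] {A : Type*} (H : Subgroup G) (act : G → A → A) :
    H → A → A := fun h => act (h : G)

/-! ## Augmentation ideal for a general group -/

/-- the augmentation map `Z[G] → Z`. -/
def augGen (G : Type*) [Group G] : MonoidAlgebra ℤ G →+* ℤ :=
  (MonoidAlgebra.lift ℤ ℤ G 1).toRingHom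

/-- the augmentation ideal `I[G] ⊆ Z[G]`. -/
def IGen (G : Type*) [Group G] : Ideal (MonoidAlgebra ℤ G) := RingHom.ker (augGen G)

/-- the action of `G` on `I[G]` by left multiplication. -/
def actIGen (G : Type*) [Group G] (g : G) (y : ↥(IGen G)) : ↥(IGen G) :=
  ⟨of ℤ G g * y.val, by
    have h0 : augGen G y.val = 0 := y.2
    simp [IGen, RingHom.mem_ker, map_mul, h0]⟩

/-- the distinguished 1-cocycle `d_H : H → I[G]`, `h ↦ h - 1`. -/
def dGen {G : Type*} [Group G] (H : Subgroup G) (h : H) : ↥(IGen G) :=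
  ⟨of ℤ G (h : G) - 1, by simp [IGen, RingHom.mem_ker, map_sub, augGen]⟩

/-! ## The groups of the paper -/

/-- the elementary abelian group `G₁₂` of order `p²`. -/
abbrev G12t (p : ℕ) := Multiplicative (ZMod p × ZMod p)
/-- a cyclic group of order `p`. -/
abbrev Cpt (p : ℕ) := Multiplicative (ZMod p)
/-- the elementary abelian group `G = ⟨σ₁⟩ × ⟨σ₂⟩ × ⟨σ₃⟩ × ⟨σ₄⟩` of order `p⁴`. -/
abbrev Gp (p : ℕ) := Multiplicative (ZMod p × ZMod p × ZMod p × ZMod p)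

def t1 (p : ℕ) : G12t p := Multiplicative.ofAdd (1, 0)
def t2 (p : ℕ) : G12t p := Multiplicative.ofAdd (0, 1)
def c1g (p : ℕ) : Cpt p := Multiplicative.ofAdd 1
def s1 (p : ℕ) : Gp p := Multiplicative.ofAdd (1, 0, 0, 0)
def s2 (p : ℕ) : Gp p := Multiplicative.ofAdd (0, 1, 0, 0)
def s3 (p : ℕ) : Gp p := Multiplicative.ofAdd (0, 0, 1, 0)
def s4 (p : ℕ) : Gp p := Multiplicative.ofAdd (0, 0, 0, 1)

/-- the group ring `Z[G₁₂]`. -/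
abbrev R12 (p : ℕ) := MonoidAlgebra ℤ (G12t p)
/-- the group ring `Z[⟨σ⟩]` of a cyclic group of order `p`. -/
abbrev RCp (p : ℕ) := MonoidAlgebra ℤ (Cpt p)
/-- the group ring `Z[G]`. -/
abbrev RG (p : ℕ) := MonoidAlgebra ℤ (Gp p)

/-- the quotient map `G → G₁₂ = G/G₃₄`. -/
def π12 (p : ℕ) : Gp p →* G12t p :=
  AddMonoidHom.toMultiplicative
    { toFun := fun v => (v.1, v.2.1), map_zero' := rfl, map_add' := fun _ _ => rfl }

/-- the quotient map `G → ⟨σ₃⟩ = G/⟨σ₁,σ₂,σ₄⟩`. -/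
def π3 (p : ℕ) : Gp p →* Cpt p :=
  AddMonoidHom.toMultiplicative
    { toFun := fun v => v.2.2.1, map_zero' := rfl, map_add' := fun _ _ => rfl }

/-- the quotient map `G → ⟨σ₄⟩ = G/⟨σ₁,σ₂,σ₃⟩`. -/
def π4 (p : ℕ) : Gp p →* Cpt p :=
  AddMonoidHom.toMultiplicative
    { toFun := fun v => v.2.2.2, map_zero' := rfl, map_add' := fun _ _ => rfl }

/-- the inclusion `G₁₂ → G`. -/
def emb12 (p : ℕ) : G12t p →* Gp p :=
  AddMonoidHom.toMultiplicative
    { toFun := fun v => (v.1, v.2, 0, 0), map_zero' := rfl,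
      map_add' := fun _ _ => by ext <;> simp }

/-- the subgroup `G₁₂ = ⟨σ₁, σ₂⟩ ≤ G`. -/
def G12sub (p : ℕ) : Subgroup (Gp p) := Subgroup.closure {s1 p, s2 p}
/-- the subgroup `G₃₄ = ⟨σ₃, σ₄⟩ ≤ G`. -/
def G34sub (p : ℕ) : Subgroup (Gp p) := Subgroup.closure {s3 p, s4 p}

/-! ## The lattice `A₂(G₁₂)` and its distinguished elements -/

/-- the map `Z[G₁₂]·d₁ ⊕ Z[G₁₂]·d₂ → I[G₁₂] ⊆ Z[G₁₂]`, `dᵢ ↦ σᵢ - 1`. -/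
def d12map (p : ℕ) : (R12 p × R12 p) →ₗ[R12 p] R12 p :=
  (LinearMap.toSpanSingleton (R12 p) (R12 p) (of ℤ (G12t p) (t1 p) - 1)).comp
      (LinearMap.fst (R12 p) (R12 p) (R12 p)) +
  (LinearMap.toSpanSingleton (R12 p) (R12 p) (of ℤ (G12t p) (t2 p) - 1)).comp
      (LinearMap.snd (R12 p) (R12 p) (R12 p))

/-- the lattice `A₂(G₁₂)`, the kernel of `Z[G₁₂]·d₁ ⊕ Z[G₁₂]·d₂ → I[G₁₂]`. -/
def A2G12 (p : ℕ) : Submodule (R12 p) (R12 p × R12 p) := LinearMap.ker (d12map p)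

/-- `u₁₂ = (σ₂-1)d₁ - (σ₁-1)d₂` as an element of `Z[G₁₂]·d₁ ⊕ Z[G₁₂]·d₂`. -/
def u12raw (p : ℕ) : R12 p × R12 p :=
  (of ℤ (G12t p) (t2 p) - 1, -(of ℤ (G12t p) (t1 p) - 1))

/-- the norm element `N = 1 + g + ⋯ + g^(p-1)` of a group ring. -/
def NN (p : ℕ) {G : Type*} [CommGroup G] (g : G) : MonoidAlgebra ℤ G :=
  ∑ k ∈ Finset.range p, of ℤ G g ^ k

/-- `b₁ = N₁·d₁`. -/
def b1raw (p : ℕ) : R12 p × R12 p := (NN p (t1 p), 0)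
/-- `b₂ = N₂·d₂`. -/
def b2raw (p : ℕ) : R12 p × R12 p := (0, NN p (t2 p))

lemma ofAdd_pow_p (p : ℕ) {A : Type*} [AddCommGroup A] (a : A) (h : p • a = 0) :
    (Multiplicative.ofAdd a) ^ p = 1 := by
  rw [← ofAdd_nsmul, h]; rfl

lemma zmod_p_smul (p : ℕ) (x : ZMod p) : p • x = 0 := by
  rw [nsmul_eq_mul, ZMod.natCast_self, zero_mul]

lemma t1_pow_p (p : ℕ) : (t1 p) ^ p = 1 := by
  refine ofAdd_pow_p p _ ?_
  rw [Prod.smul_mk, zmod_p_smul, zmod_p_smul]; rfl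

lemma t2_pow_p (p : ℕ) : (t2 p) ^ p = 1 := by
  refine ofAdd_pow_p p _ ?_
  rw [Prod.smul_mk, zmod_p_smul, zmod_p_smul]; rfl

lemma c1g_pow_p (p : ℕ) : (c1g p) ^ p = 1 := by
  refine ofAdd_pow_p p _ (zmod_p_smul p _)

lemma NN_mul (p : ℕ) {G : Type*} [CommGroup G] (g : G) (h : g ^ p = 1) :
    NN p g * (of ℤ G g - 1) = 0 := by
  rw [NN, geom_sum_mul, ← map_pow, h, map_one, sub_self]

lemma u12raw_mem (p : ℕ) : u12raw p ∈ A2G12 p := by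
  simp only [A2G12, LinearMap.mem_ker, d12map, LinearMap.add_apply, LinearMap.comp_apply,
    LinearMap.fst_apply, LinearMap.snd_apply, LinearMap.toSpanSingleton_apply, u12raw,
    smul_eq_mul]
  ring

lemma b1raw_mem (p : ℕ) : b1raw p ∈ A2G12 p := by
  simp only [A2G12, LinearMap.mem_ker, d12map, LinearMap.add_apply, LinearMap.comp_apply,
    LinearMap.fst_apply, LinearMap.snd_apply, LinearMap.toSpanSingleton_apply, b1raw,
    smul_eq_mul, zero_mul, add_zero]
  exact NN_mul p _ (t1_pow_p p)

lemma b2raw_mem (p : ℕ) : b2raw p ∈ A2G12 p := by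
  simp only [A2G12, LinearMap.mem_ker, d12map, LinearMap.add_apply, LinearMap.comp_apply,
    LinearMap.fst_apply, LinearMap.snd_apply, LinearMap.toSpanSingleton_apply, b2raw,
    smul_eq_mul, zero_mul, zero_add]
  exact NN_mul p _ (t2_pow_p p)

/-- `u₁₂` as an element of `A₂(G₁₂)`. -/
def u12e (p : ℕ) : ↥(A2G12 p) := ⟨u12raw p, u12raw_mem p⟩
/-- `b₁` as an element of `A₂(G₁₂)`. -/
def b1e (p : ℕ) : ↥(A2G12 p) := ⟨b1raw p, b1raw_mem p⟩
/-- `b₂` as an element of `A₂(G₁₂)`. -/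
def b2e (p : ℕ) : ↥(A2G12 p) := ⟨b2raw p, b2raw_mem p⟩

/-- the action of `G₁₂` on `A₂(G₁₂)`. -/
def actA2 (p : ℕ) (x : G12t p) (v : ↥(A2G12 p)) : ↥(A2G12 p) :=
  of ℤ (G12t p) x • v

/-! ## The cyclic lattice `A₂(⟨σ⟩)` -/

/-- the map `Z[⟨σ⟩]·d → I[⟨σ⟩]`, `d ↦ σ - 1`. -/
def dcmap (p : ℕ) : RCp p →ₗ[RCp p] RCp p :=
  LinearMap.toSpanSingleton (RCp p) (RCp p) (of ℤ (Cpt p) (c1g p) - 1)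

/-- the lattice `A₂(⟨σ⟩)` for a cyclic group of order `p`. -/
def A2C (p : ℕ) : Submodule (RCp p) (RCp p) := LinearMap.ker (dcmap p)

/-- the norm element `N = 1 + σ + ⋯ + σ^(p-1)` as an element of `A₂(⟨σ⟩)`. -/
def NCe (p : ℕ) : ↥(A2C p) :=
  ⟨NN p (c1g p), by
    simp only [A2C, LinearMap.mem_ker, dcmap, LinearMap.toSpanSingleton_apply, smul_eq_mul]
    exact NN_mul p _ (c1g_pow_p p)⟩

/-- the action of `G` on `A₂(⟨σⱼ⟩)` through a projection `π : G → ⟨σⱼ⟩`. -/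
def actCvia (p : ℕ) (π : Gp p →* Cpt p) (g : Gp p) (v : ↥(A2C p)) : ↥(A2C p) :=
  of ℤ (Cpt p) (π g) • v

/-! ## The explicit canonical 2-cocycles -/

/-- the elements `u_{m,n} ∈ A₂(G₁₂)` (equation (13) of the paper). -/
def umn (p : ℕ) (m1 m2 n1 n2 : ℕ) : ↥(A2G12 p) :=
  (-(of ℤ (G12t p) (t1 p ^ m1) * ∑ j ∈ Finset.range n1, ∑ i ∈ Finset.range m2,
      of ℤ (G12t p) (t1 p ^ i * t2 p ^ j))) • u12e p +
  (of ℤ (G12t p) (t1 p ^ n1) * ∑ j ∈ Finset.range n2, ∑ i ∈ Finset.range m1,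
      of ℤ (G12t p) (t1 p ^ i * t2 p ^ j)) • u12e p

/-- the explicit 2-cocycle `c₁₂` representing the canonical class `[c_{G₁₂}]`. -/
def c12coc (p : ℕ) (x y : G12t p) : ↥(A2G12 p) :=
  let m1 := (Multiplicative.toAdd x).1.val
  let m2 := (Multiplicative.toAdd x).2.val
  let n1 := (Multiplicative.toAdd y).1.val
  let n2 := (Multiplicative.toAdd y).2.val
  of ℤ (G12t p) (t1 p ^ m1) • umn p 0 m2 n1 0 +
    ((m1 + n1) / p) • b1e p +
    ((m2 + n2) / p) • (of ℤ (G12t p) (t1 p ^ ((m1 + n1) % p)) • b2e p)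

/-- the explicit 2-cocycle representing the canonical class of a cyclic group of
order `p` with coefficients in `A₂(⟨σ⟩)`. -/
def ccyc (p : ℕ) (x y : Cpt p) : ↥(A2C p) :=
  if p ≤ (Multiplicative.toAdd x).val + (Multiplicative.toAdd y).val then NCe p else 0

/-! ## The lattice `Q = A₂(G₁₂) ⊕ K₃ ⊕ K₄` -/

/-- `K_j = A₂(⟨σⱼ⟩) ⊕ Z[⟨σⱼ⟩]`. -/
abbrev Kc (p : ℕ) := ↥(A2C p) × RCp p

/-- the carrier of the `G`-lattice `Q = A₂(G₁₂) ⊕ K₃ ⊕ K₄`. -/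
abbrev Qc (p : ℕ) := ↥(A2G12 p) × Kc p × Kc p

/-- the action of `G` on `Q`: `G₁₂` acts naturally on `A₂(G₁₂)` and trivially on
`K₃`, `K₄`; `⟨σⱼ⟩` acts naturally on `K_j` and trivially elsewhere. -/
def actQ (p : ℕ) (g : Gp p) (q : Qc p) : Qc p :=
  (of ℤ (G12t p) (π12 p g) • q.1,
   (of ℤ (Cpt p) (π3 p g) • q.2.1.1, of ℤ (Cpt p) (π3 p g) * q.2.1.2),
   (of ℤ (Cpt p) (π4 p g) • q.2.2.1, of ℤ (Cpt p) (π4 p g) * q.2.2.2))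

/-- the 2-cocycle `ω = inf(c₁₂) - inf(c₃) - inf(c₄)` with values in `Q`. -/
def ωc (p : ℕ) (g g' : Gp p) : Qc p :=
  (c12coc p (π12 p g) (π12 p g'),
   (-(ccyc p (π3 p g) (π3 p g')), 0),
   (-(ccyc p (π4 p g) (π4 p g')), 0))

/-- the order of the restriction of `[ω]` to a subgroup `H ≤ G` in `H²(H, Q)`. -/
def nOrd (p : ℕ) (H : Subgroup (Gp p)) : ℕ :=
  sInf {n : ℕ | 0 < n ∧
    IsTwoCoboundary (resAct H (actQ p)) fun h h' => n • ωc p (h : Gp p) (h' : Gp p)}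

/-! ## The augmentation ideal `I[G]` and the lattice `M_ω` -/

/-- the augmentation map `Z[G] → Z`. -/
def aug (p : ℕ) : RG p →+* ℤ := (MonoidAlgebra.lift ℤ ℤ (Gp p) 1).toRingHom

/-- the augmentation ideal `I[G]`. -/
def IG (p : ℕ) : Ideal (RG p) := RingHom.ker (aug p)

/-- the action of `G` on `I[G]` by left multiplication. -/
def actIG (p : ℕ) (g : Gp p) (y : ↥(IG p)) : ↥(IG p) :=
  ⟨of ℤ (Gp p) g * y.val, by
    have h0 : aug p y.val = 0 := y.2
    simp [IG, RingHom.mem_ker, map_mul, h0]⟩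

/-- the 1-cocycle `d_H : H → I[G]`, `h ↦ h - 1`. -/
def dH (p : ℕ) (H : Subgroup (Gp p)) (h : H) : ↥(IG p) :=
  ⟨of ℤ (Gp p) (h : Gp p) - 1, by simp [IG, RingHom.mem_ker, map_sub, aug]⟩

/-- the carrier of the `G`-lattice `M_ω = Q ⊕ I[G]`. -/
abbrev Mc (p : ℕ) := Qc p × ↥(IG p)

/-- the `Q`-valued correction term of the twisted action on `M_ω`:
`θ(g, Σ a_{g'} g') = Σ a_{g'} ω(g, g')`; on `y ∈ I[G]` (so `Σ a_{g'} = 0` and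
`y = Σ a_{g'} (g' - 1)`) this is the `Q`-component of `g·(0, y)`. -/
def θω (p : ℕ) (g : Gp p) (y : RG p) : Qc p :=
  Finsupp.sum y.coeff fun g' a => a • ωc p g g'

/-- the twisted action of `G` on `M_ω = Q ⊕ I[G]`: `g(x,0) = (gx, 0)` and
`g(0, g'-1) = (ω(g,g'), g(g'-1))`, extended `Z`-linearly. -/
def actM (p : ℕ) (g : Gp p) (m : Mc p) : Mc p :=
  (actQ p g m.1 + θω p g m.2.val, actIG p g m.2)

/-! ## The map `π : A₂(G₁₂) → Z/pZ` -/

/-- the `G₁₂`-module homomorphism `π : A₂(G₁₂) → Z/pZ`, determined by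
`π(x·u₁₂ + y·b₁ + z·b₂) = ε(x) mod p`; concretely it sends `v = (v₁, v₂)` to
`Σ_g v₁(g)·(exponent of σ₂ in g)`. -/
def πmap (p : ℕ) (v : ↥(A2G12 p)) : ZMod p :=
  Finsupp.sum (v : R12 p × R12 p).1.coeff fun g a => (a : ZMod p) * (Multiplicative.toAdd g).2

/-! ## The set `𝓗` of subgroups, the cochains `v_H`, and the lattice `M` -/

/-- the set of subgroups `𝓗 = {G} ∪ {⟨τ, σ₃, σ₄⟩ : τ ∈ G₁₂}`. -/
def HH (p : ℕ) : Set (Subgroup (Gp p)) :=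
  insert ⊤ {H | ∃ τ ∈ G12sub p, H = Subgroup.closure {τ, s3 p, s4 p}}

/-- the 1-cochain `v_H : H₁₂ → A₂(G₁₂)`, `v_H(h̄₁) = Σ_{h̄ ∈ H₁₂} c₁₂(h̄₁, h̄)`,
here inflated to a function of `h̄₁ ∈ G₁₂`. -/
def vH (p : ℕ) (H : Subgroup (Gp p)) (x : G12t p) : ↥(A2G12 p) :=
  ∑ᶠ h' : ↥(H.map (π12 p)), c12coc p x (h' : G12t p)

/-- the 1-cochain `f_H : H → M_ω`, `f_H(h) = (z_H(h) - v_H(h̄), n_H·(h-1))`,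
built from a choice of 1-cochain `z_H : H → K₃ ⊕ K₄`. -/
def fHof (p : ℕ) (H : Subgroup (Gp p)) (zH : H → Kc p × Kc p) (h : H) : Mc p :=
  ((-(vH p H (π12 p (h : Gp p))), (zH h).1, (zH h).2),
   (nOrd p H) • dH p H h)

/-- the carrier of the permutation lattice `P = ⊕_{H ∈ 𝓗} Z[G/H]`. -/
abbrev Pc (p : ℕ) := ∀ H : ↥(HH p), ((Gp p ⧸ (H : Subgroup (Gp p))) →₀ ℤ)

/-- the carrier of the `G`-lattice `M = M_ω ⊕ P`. -/
abbrev MC (p : ℕ) := Mc p × Pc p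

/-- the action of `G` on `M = M_ω ⊕ P`, twisted by a family of 1-cocycles
`f_H : H → M_ω` (`H ∈ 𝓗`): `g(x, 0) = (gx, 0)` and
`g(0, u_{gᵢH}) = (gⱼ·f_H(h), u_{gⱼH})` where `g·gᵢ = gⱼ·h`, `h ∈ H`, and the coset
representatives are chosen by `Quotient.out`. -/
def actMFull (p : ℕ) (fH : ∀ H : ↥(HH p), (↥(H.val) → Mc p))
    (g : Gp p) (m : MC p) : MC p :=
  (actM p g m.1 +
     ∑ᶠ H : ↥(HH p), Finsupp.sum (m.2 H) fun c a =>
       a • actM p (Quotient.out (g • c))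
         (fH H ⟨(Quotient.out (g • c))⁻¹ * (g * Quotient.out c), by
            rw [← QuotientGroup.eq, QuotientGroup.out_eq', ← smul_eq_mul,
              MulAction.Quotient.mk_smul_out]⟩),
   fun H => Finsupp.mapDomain (fun c => g • c) (m.2 H))

/-- the map `π' : M → Z/pZ`, `(x₀, x₁, x₂, y, z) ↦ π(x₀)`. -/
def πmap' (p : ℕ) (m : MC p) : ZMod p := πmap p m.1.1.1

/-- the norm element `N₃₄ = Σ_{g ∈ G₃₄} g ∈ Z[G]`. -/
def N34 (p : ℕ) : RG p := ∑ᶠ g : ↥(G34sub p), of ℤ (Gp p) (g : Gp p)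

/-- the augmentation map `Z[G₁₂] → Z`. -/
def aug12 (p : ℕ) : R12 p →+* ℤ := (MonoidAlgebra.lift ℤ ℤ (G12t p) 1).toRingHom

/-- auxiliary additive map computing `πmap` on the first component. -/
def Fmap (p : ℕ) : R12 p →+ ZMod p :=
  (Finsupp.liftAddHom fun (g : G12t p) =>
    (AddMonoidHom.mulRight (((Multiplicative.toAdd g).2 : ZMod p))).comp
      (Int.castAddHom (ZMod p))).comp (MonoidAlgebra.coeffAddEquiv : R12 p ≃+ (G12t p →₀ ℤ)).toAddMonoidHom

lemma Fmap_single (p : ℕ) (g : G12t p) (a : ℤ) :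
    Fmap p (MonoidAlgebra.single g a) = (a : ZMod p) * (Multiplicative.toAdd g).2 := by
  show Finsupp.sum (Finsupp.single g a)
      (fun g b => (b : ZMod p) * ((Multiplicative.toAdd g).2 : ZMod p)) = _
  rw [Finsupp.sum_single_index] <;> simp

lemma πmap_eq_Fmap (p : ℕ) (v : ↥(A2G12 p)) :
    πmap p v = Fmap p (v : R12 p × R12 p).1 := by
  simp only [πmap, Fmap, AddMonoidHom.comp_apply, Finsupp.liftAddHom_apply]
  rfl

/-- augmentation into `ZMod p`. -/
def εp (p : ℕ) : R12 p →ₐ[ℤ] ZMod p := MonoidAlgebra.lift ℤ (ZMod p) (G12t p) 1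

lemma εp_of (p : ℕ) (g : G12t p) : εp p (of ℤ (G12t p) g) = 1 := by
  simp [εp]

lemma Fmap_mul_key (p : ℕ) (x : R12 p) :
    Fmap p (x * (of ℤ (G12t p) (t2 p) - 1)) = εp p x := by
  induction x using MonoidAlgebra.induction_linear with
  | zero => simp
  | add a b ha hb => rw [add_mul, map_add, ha, hb, map_add]
  | single g a =>
    rw [mul_sub, mul_one]
    have hmul : (MonoidAlgebra.single g a : R12 p) * of ℤ (G12t p) (t2 p)
        = MonoidAlgebra.single (g * t2 p) a := by
      rw [MonoidAlgebra.of_apply, MonoidAlgebra.single_mul_single, mul_one]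
    rw [hmul, map_sub]
    have h1 : Fmap p (MonoidAlgebra.single (g * t2 p) a)
        = (a : ZMod p) * (Multiplicative.toAdd (g * t2 p)).2 := Fmap_single p _ a
    have h1' : Fmap p (MonoidAlgebra.single g a)
        = (a : ZMod p) * (Multiplicative.toAdd g).2 := Fmap_single p _ a
    rw [h1, h1']
    have h2 : ((Multiplicative.toAdd (g * t2 p)).2 : ZMod p)
        = ((Multiplicative.toAdd g).2 : ZMod p) + 1 := by
      have : Multiplicative.toAdd (g * t2 p) = Multiplicative.toAdd g + (0, 1) := rfl
      rw [this]
      push_cast [Prod.snd_add]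
      rfl
    rw [h2]
    have h3 : εp p (MonoidAlgebra.single g a) = (a : ZMod p) := by
      rw [εp, MonoidAlgebra.lift_single]
      simp
    rw [h3]
    ring

lemma εp_double_sum (p : ℕ) (n m : ℕ) :
    εp p (∑ j ∈ Finset.range n, ∑ i ∈ Finset.range m,
        of ℤ (G12t p) (t1 p ^ i * t2 p ^ j)) = (n : ZMod p) * m := by
  rw [map_sum]
  have : ∀ j ∈ Finset.range n, εp p (∑ i ∈ Finset.range m,
      of ℤ (G12t p) (t1 p ^ i * t2 p ^ j)) = (m : ZMod p) := by
    intro j _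
    rw [map_sum]
    rw [Finset.sum_congr rfl (fun i _ => εp_of p _)]
    simp
  rw [Finset.sum_congr rfl this]
  simp [mul_comm]

theorem statement12 (p : ℕ) (hp : p.Prime) (m1 m2 n1 n2 : ℕ) :
    πmap p (umn p m1 m2 n1 n2) = (m1 : ZMod p) * n2 - (m2 : ZMod p) * n1 := by
  rw [πmap_eq_Fmap]
  have hval : ((umn p m1 m2 n1 n2 : ↥(A2G12 p)) : R12 p × R12 p).1
      = ((-(of ℤ (G12t p) (t1 p ^ m1) * ∑ j ∈ Finset.range n1, ∑ i ∈ Finset.range m2,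
            of ℤ (G12t p) (t1 p ^ i * t2 p ^ j))) +
         (of ℤ (G12t p) (t1 p ^ n1) * ∑ j ∈ Finset.range n2, ∑ i ∈ Finset.range m1,
            of ℤ (G12t p) (t1 p ^ i * t2 p ^ j))) * (of ℤ (G12t p) (t2 p) - 1) := by
    simp only [umn, u12e, u12raw, Submodule.coe_add, SetLike.val_smul, Prod.fst_add,
      Prod.smul_fst, smul_eq_mul, add_mul]
  rw [hval, Fmap_mul_key, map_add, map_neg, map_mul, map_mul, εp_of, εp_of,
    εp_double_sum, εp_double_sum]
  ring

end
end

section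
/- Assume p ≠ 2. For every H ∈ 𝓗 and every h̄ ∈ H12, π(v_H(h̄)) = 0, where v_H(h̄1) = Σ_{h̄' ∈ H12} c12(h̄1, h̄'). -/
open MonoidAlgebra

set_option maxHeartbeats 1000000
set_option synthInstance.maxHeartbeats 400000

noncomputable section

/-! ## Auxiliary lemmas for statement13 -/

/-- the additive map `Z[G₁₂] → Z/pZ`, `Σ a_g g ↦ Σ a_g·(exponent of σ₂ in g)`. -/
def Dm (p : ℕ) : R12 p →+ ZMod p :=
  (Finsupp.liftAddHom fun g : G12t p =>
    (AddMonoidHom.mulRight ((Multiplicative.toAdd g).2 : ZMod p)).comp (Int.castAddHom (ZMod p))).comp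
    (MonoidAlgebra.coeffAddEquiv (R := ℤ) (M := G12t p)).toAddMonoidHom

lemma Dm_single (p : ℕ) (g : G12t p) (a : ℤ) :
    Dm p (MonoidAlgebra.single g a) = (a : ZMod p) * (Multiplicative.toAdd g).2 := by
  have h : Dm p (MonoidAlgebra.single g a) = Finsupp.sum (MonoidAlgebra.single g a).coeff
      (fun g' a' => (a' : ZMod p) * (Multiplicative.toAdd g').2) := rfl
  rw [h, MonoidAlgebra.coeff_single, Finsupp.sum_single_index]
  simp

lemma πmap_eq_Dm (p : ℕ) (v : ↥(A2G12 p)) : πmap p v = Dm p (v : R12 p × R12 p).1 := by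
  rfl


lemma aug12_single (p : ℕ) (g : G12t p) (a : ℤ) :
    aug12 p (MonoidAlgebra.single g a) = a := by
  simp [aug12, MonoidAlgebra.lift_single]

lemma aug12_of (p : ℕ) (g : G12t p) : aug12 p (of ℤ (G12t p) g) = 1 := by
  rw [MonoidAlgebra.of_apply, aug12_single]

lemma Dm_of (p : ℕ) (g : G12t p) :
    Dm p (of ℤ (G12t p) g) = (Multiplicative.toAdd g).2 := by
  rw [MonoidAlgebra.of_apply, Dm_single]; simp

lemma Dm_mul (p : ℕ) (r s : R12 p) :
    Dm p (r * s) = (aug12 p r : ZMod p) * Dm p s + Dm p r * (aug12 p s : ZMod p) := by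
  induction r using MonoidAlgebra.induction_linear with
  | zero => simp
  | add f g hf hg => simp only [add_mul, map_add, hf, hg]; push_cast; ring
  | single g a =>
    induction s using MonoidAlgebra.induction_linear with
    | zero => simp
    | add f g' hf hg => simp only [mul_add, map_add, hf, hg]; push_cast; ring
    | single h b =>
      rw [MonoidAlgebra.single_mul_single, Dm_single, Dm_single, Dm_single,
        aug12_single, aug12_single]
      simp only [toAdd_mul, Prod.snd_add]
      push_cast; ring

lemma toAdd_t1_pow_snd (p : ℕ) (k : ℕ) : (Multiplicative.toAdd (t1 p ^ k)).2 = 0 := by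
  simp [t1, toAdd_pow]

lemma Dm_NN1 (p : ℕ) : Dm p (NN p (t1 p)) = 0 := by
  rw [NN, map_sum]
  refine Finset.sum_eq_zero fun k _ => ?_
  rw [← map_pow, Dm_of, toAdd_t1_pow_snd]

lemma Dm_mul_t2sub (p : ℕ) (r : R12 p) :
    Dm p (r * (of ℤ (G12t p) (t2 p) - 1)) = (aug12 p r : ZMod p) := by
  have h1 : Dm p (of ℤ (G12t p) (t2 p) - 1) = 1 := by
    rw [map_sub, Dm_of, MonoidAlgebra.one_def, Dm_single]
    simp [t2]
  have h2 : aug12 p (of ℤ (G12t p) (t2 p) - 1) = 0 := by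
    rw [map_sub, aug12_of, map_one, sub_self]
  rw [Dm_mul, h1, h2]
  push_cast; ring

lemma πmap_c12coc (p : ℕ) (x y : G12t p) :
    πmap p (c12coc p x y) =
      -(((Multiplicative.toAdd y).1.val : ZMod p) *
        ((Multiplicative.toAdd x).2.val : ZMod p)) := by
  rw [πmap_eq_Dm]
  set m1 := (Multiplicative.toAdd x).1.val with hm1
  set m2 := (Multiplicative.toAdd x).2.val with hm2
  set n1 := (Multiplicative.toAdd y).1.val with hn1
  set S : R12 p := ∑ j ∈ Finset.range n1, ∑ i ∈ Finset.range m2,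
      of ℤ (G12t p) (t1 p ^ i * t2 p ^ j) with hS
  have hfst : ((c12coc p x y : ↥(A2G12 p)) : R12 p × R12 p).1 =
      of ℤ (G12t p) (t1 p ^ m1) * (-S * (of ℤ (G12t p) (t2 p) - 1)) +
      ((m1 + n1) / p) • NN p (t1 p) := by
    simp only [c12coc, umn, u12e, b1e, b2e, u12raw, b1raw, b2raw, hS, ← hm1, ← hm2, ← hn1]
    simp [smul_eq_mul, ← MonoidAlgebra.one_def]
  have haugS : aug12 p S = (n1 : ℤ) * (m2 : ℤ) := by
    rw [hS, map_sum]
    simp only [map_sum, aug12_of, Finset.sum_const, Finset.card_range, smul_eq_mul, mul_one]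
    push_cast
    ring
  have hDX : Dm p (-S * (of ℤ (G12t p) (t2 p) - 1)) =
      -((n1 : ZMod p) * (m2 : ZMod p)) := by
    rw [neg_mul, map_neg, Dm_mul_t2sub, haugS]; push_cast; ring
  rw [hfst, map_add, AddMonoidHom.map_nsmul, Dm_NN1, smul_zero, add_zero, Dm_mul, hDX,
    aug12_of, Dm_of, toAdd_t1_pow_snd]
  push_cast; ring

lemma sum_fst_subgroup (p : ℕ) (hp : p.Prime) (hodd : p ≠ 2) (S : Subgroup (G12t p))
    [Fintype ↥S] : ∑ h : ↥S, (Multiplicative.toAdd (h : G12t p)).1 = 0 := by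
  haveI : Fact p.Prime := ⟨hp⟩
  set T := ∑ h : ↥S, (Multiplicative.toAdd (h : G12t p)).1 with hT
  have h1 : T = -T := by
    have := Fintype.sum_equiv (Equiv.inv ↥S)
      (fun h : ↥S => -(Multiplicative.toAdd (h : G12t p)).1)
      (fun h : ↥S => (Multiplicative.toAdd (h : G12t p)).1)
      (fun h => by simp)
    rw [Finset.sum_neg_distrib] at this
    exact neg_eq_iff_eq_neg.mp this
  have h2 : (2 : ZMod p) * T = 0 := by
    rw [two_mul]
    nth_rewrite 2 [h1]
    exact add_neg_cancel T
  have h2' : (2 : ZMod p) ≠ 0 := by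
    intro h
    have hd : p ∣ 2 := by
      have := (ZMod.natCast_eq_zero_iff 2 p).mp (by exact_mod_cast h)
      exact this
    exact hodd ((Nat.prime_dvd_prime_iff_eq hp Nat.prime_two).mp hd)
  exact (mul_eq_zero.mp h2).resolve_left h2'

theorem statement13 (p : ℕ) [NeZero p] (hp : p.Prime) (hodd : p ≠ 2)
    (H : Subgroup (Gp p)) (hH : H ∈ HH p) (x : G12t p) (hx : x ∈ H.map (π12 p)) :
    πmap p (vH p H x) = 0 := by
  classical
  haveI : Fintype ↥(H.map (π12 p)) := Fintype.ofFinite _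
  have hsum : πmap p (vH p H x) =
      ∑ h : ↥(H.map (π12 p)), πmap p (c12coc p x (h : G12t p)) := by
    rw [vH, finsum_eq_sum_of_fintype, πmap_eq_Dm]
    rw [show (((∑ h : ↥(H.map (π12 p)), c12coc p x (h : G12t p)) : ↥(A2G12 p)) :
        R12 p × R12 p).1 = ∑ h : ↥(H.map (π12 p)),
          ((c12coc p x (h : G12t p) : ↥(A2G12 p)) : R12 p × R12 p).1 by
      rw [AddSubmonoidClass.coe_finset_sum, Prod.fst_sum]]
    rw [map_sum]
    simp only [πmap_eq_Dm]
  rw [hsum]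
  simp only [πmap_c12coc]
  have h0 : ∑ h : ↥(H.map (π12 p)), ((Multiplicative.toAdd (h : G12t p)).1.val : ZMod p)
      = 0 := by
    have := sum_fst_subgroup p hp hodd (H.map (π12 p))
    simpa [ZMod.natCast_val, ZMod.cast_id] using this
  simp only [← neg_mul]
  rw [← Finset.sum_mul, Finset.sum_neg_distrib, h0, neg_zero, zero_mul]
end
end

section
/- Assume p ≠ 2. The map π' : M^{G34} → Z/pZ defined by π'((x0, x1, x2), y, z) = π(x0), for (x0, x1, x2) ∈ A_2(G12) ⊕ K3 ⊕ K4 = Q, y ∈ I[G], z ∈ P, is a G-module homomorphism where G acts trivially on Z/pZ; in particular it extends π on A_2(G12), which lies in M^{G34}. -/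
open MonoidAlgebra

set_option maxHeartbeats 1000000
set_option synthInstance.maxHeartbeats 400000

noncomputable section

/-! ## Auxiliary machinery -/

section LFsec

variable {p : ℕ} [NeZero p] {G : Type*} [CommGroup G] [Fintype G]

/-- the linear functional on `Z[G]` attached to `F : G → ZMod p`. -/
def LF (p : ℕ) [NeZero p] (G : Type*) [CommGroup G] [Fintype G] (F : G → ZMod p) :
    MonoidAlgebra ℤ G →+ ZMod p where
  toFun x := ∑ g : G, (x.coeff g : ZMod p) * F g
  map_zero' := by simp
  map_add' x y := by
    rw [← Finset.sum_add_distrib]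
    refine Finset.sum_congr rfl fun g _ => ?_
    rw [MonoidAlgebra.coeff_add, Finsupp.add_apply]
    push_cast
    ring

lemma LF_apply (F : G → ZMod p) (x : MonoidAlgebra ℤ G) :
    LF p G F x = ∑ g : G, (x.coeff g : ZMod p) * F g := rfl

lemma LF_single (F : G → ZMod p) (a : G) (c : ℤ) :
    LF p G F (single a c) = (c : ZMod p) * F a := by
  classical
  rw [LF_apply]
  rw [Finset.sum_eq_single a]
  · rw [MonoidAlgebra.coeff_single, Finsupp.single_eq_same]
  · intro b _ hb
    rw [MonoidAlgebra.coeff_single, Finsupp.single_eq_of_ne hb, Int.cast_zero, zero_mul]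
  · intro h; exact absurd (Finset.mem_univ a) h

lemma LF_of_mul (F : G → ZMod p) (hF : ∀ a b : G, F (a * b) = F a + F b)
    (τ : G) (x : MonoidAlgebra ℤ G) :
    LF p G F (of ℤ G τ * x) = F τ * LF p G (fun _ => 1) x + LF p G F x := by
  classical
  rw [LF_apply, LF_apply, LF_apply]
  rw [← Equiv.sum_comp (Equiv.mulLeft τ) (fun g => ((of ℤ G τ * x).coeff g : ZMod p) * F g)]
  have : ∀ g : G, ((of ℤ G τ * x).coeff (Equiv.mulLeft τ g) : ZMod p) * F (Equiv.mulLeft τ g)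
      = (x.coeff g : ZMod p) * (F τ + F g) := by
    intro g
    rw [MonoidAlgebra.of_apply, MonoidAlgebra.coeff_single_mul_apply, one_mul]
    simp only [Equiv.coe_mulLeft]
    rw [inv_mul_cancel_left, ← hF]
  rw [Finset.sum_congr rfl fun g _ => this g]
  rw [Finset.mul_sum, ← Finset.sum_add_distrib]
  refine Finset.sum_congr rfl fun g _ => ?_
  ring

lemma LF_mul_of (F : G → ZMod p) (hF : ∀ a b : G, F (a * b) = F a + F b)
    (τ : G) (x : MonoidAlgebra ℤ G) :
    LF p G F (x * of ℤ G τ) = F τ * LF p G (fun _ => 1) x + LF p G F x := by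
  rw [mul_comm]; exact LF_of_mul F hF τ x

lemma LF_aug_of_mul (τ : G) (x : MonoidAlgebra ℤ G) :
    LF p G (fun _ => (1 : ZMod p)) (of ℤ G τ * x) = LF p G (fun _ => 1) x := by
  classical
  rw [LF_apply, LF_apply]
  rw [← Equiv.sum_comp (Equiv.mulLeft τ) (fun g => ((of ℤ G τ * x).coeff g : ZMod p) * 1)]
  refine Finset.sum_congr rfl fun g _ => ?_
  rw [MonoidAlgebra.of_apply, MonoidAlgebra.coeff_single_mul_apply, one_mul]
  simp only [Equiv.coe_mulLeft]
  rw [inv_mul_cancel_left]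

end LFsec
section Pih

set_option linter.unusedSectionVars false

variable {p : ℕ} [NeZero p]

/-- first exponent functional on `G₁₂`. -/
def e1f (p : ℕ) : G12t p → ZMod p := fun g => (Multiplicative.toAdd g).1
/-- second exponent functional on `G₁₂`. -/
def e2f (p : ℕ) : G12t p → ZMod p := fun g => (Multiplicative.toAdd g).2

lemma e1f_mul (a b : G12t p) : e1f p (a * b) = e1f p a + e1f p b := rfl
lemma e2f_mul (a b : G12t p) : e2f p (a * b) = e2f p a + e2f p b := rfl

/-- `π` as an additive homomorphism. -/
def pih (p : ℕ) [NeZero p] : ↥(A2G12 p) →+ ZMod p where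
  toFun v := LF p (G12t p) (e2f p) (v : R12 p × R12 p).1
  map_zero' := by simp
  map_add' v w := by
    rw [Submodule.coe_add, Prod.fst_add, map_add]

lemma pimap_eq_pih (v : ↥(A2G12 p)) : πmap p v = pih p v := by
  show Finsupp.sum (v : R12 p × R12 p).1.coeff _ = _
  rw [Finsupp.sum_fintype]
  · rfl
  · intro g; rw [Int.cast_zero, zero_mul]

/-- the augmentation of the first component of an element of `A₂(G₁₂)` vanishes mod `p`. -/
lemma A2_aug_fst (v : ↥(A2G12 p)) :
    LF p (G12t p) (fun _ => 1) (v : R12 p × R12 p).1 = 0 := by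
  have hv' : (v : R12 p × R12 p).1 * (of ℤ (G12t p) (t1 p) - 1)
      + (v : R12 p × R12 p).2 * (of ℤ (G12t p) (t2 p) - 1) = 0 := by
    have h := v.2
    simp only [A2G12, LinearMap.mem_ker, d12map, LinearMap.add_apply, LinearMap.coe_comp,
      Function.comp_apply, LinearMap.fst_apply, LinearMap.snd_apply,
      LinearMap.toSpanSingleton_apply, smul_eq_mul] at h
    exact h
  have := congrArg (LF p (G12t p) (e1f p)) hv'
  rw [map_add, map_zero, mul_sub, mul_sub, mul_one, mul_one, map_sub, map_sub,
    LF_mul_of _ (e1f_mul), LF_mul_of _ (e1f_mul)] at this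
  have he1 : e1f p (t1 p) = 1 := rfl
  have he2 : e1f p (t2 p) = 0 := rfl
  rw [he1, he2, zero_mul, one_mul] at this
  simpa using this

lemma pih_of_smul (σ : G12t p) (v : ↥(A2G12 p)) :
    pih p (of ℤ (G12t p) σ • v) = pih p v := by
  have h1 : ((of ℤ (G12t p) σ • v : ↥(A2G12 p)) : R12 p × R12 p).1
      = of ℤ (G12t p) σ * (v : R12 p × R12 p).1 := rfl
  show LF p (G12t p) (e2f p) _ = _
  rw [h1, LF_of_mul _ (e2f_mul), A2_aug_fst, mul_zero, zero_add]
  rfl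

lemma pih_smul_u12 (a : R12 p) :
    pih p (a • u12e p) = LF p (G12t p) (fun _ => 1) a := by
  have h1 : ((a • u12e p : ↥(A2G12 p)) : R12 p × R12 p).1
      = a * (of ℤ (G12t p) (t2 p) - 1) := rfl
  show LF p (G12t p) (e2f p) _ = _
  rw [h1, mul_sub, mul_one, map_sub, LF_mul_of _ (e2f_mul)]
  have : e2f p (t2 p) = 1 := rfl
  rw [this, one_mul]
  ring

lemma pih_b1e : pih p (b1e p) = 0 := by
  show LF p (G12t p) (e2f p) (NN p (t1 p)) = 0
  rw [NN, map_sum]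
  refine Finset.sum_eq_zero fun k _ => ?_
  rw [← map_pow, MonoidAlgebra.of_apply, LF_single]
  have : e2f p (t1 p ^ k) = 0 := by
    show ((Multiplicative.toAdd (t1 p ^ k)).2 : ZMod p) = 0
    rw [toAdd_pow]
    show (k • ((0 : ZMod p)) : ZMod p) = 0
    exact smul_zero k
  rw [this, mul_zero]

lemma pih_b2e_smul (a : R12 p) : pih p (a • b2e p) = 0 := by
  have h1 : ((a • b2e p : ↥(A2G12 p)) : R12 p × R12 p).1 = a * 0 := rfl
  show LF p (G12t p) (e2f p) _ = 0
  rw [h1, mul_zero, map_zero]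

lemma aug_of_pow_mul_sum (n1 m2 : ℕ) (σ : G12t p) :
    LF p (G12t p) (fun _ => (1 : ZMod p))
      (of ℤ (G12t p) σ * ∑ j ∈ Finset.range n1, ∑ i ∈ Finset.range m2,
        of ℤ (G12t p) (t1 p ^ i * t2 p ^ j)) = (n1 : ZMod p) * (m2 : ZMod p) := by
  rw [LF_aug_of_mul, map_sum]
  have : ∀ j, LF p (G12t p) (fun _ => (1 : ZMod p))
      (∑ i ∈ Finset.range m2, of ℤ (G12t p) (t1 p ^ i * t2 p ^ j)) = (m2 : ZMod p) := by
    intro j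
    rw [map_sum]
    have : ∀ i, LF p (G12t p) (fun _ => (1 : ZMod p)) (of ℤ (G12t p) (t1 p ^ i * t2 p ^ j))
        = 1 := by
      intro i
      rw [MonoidAlgebra.of_apply, LF_single, Int.cast_one, one_mul]
    rw [Finset.sum_congr rfl fun i _ => this i, Finset.sum_const, Finset.card_range,
      nsmul_eq_mul, mul_one]
  rw [Finset.sum_congr rfl fun j _ => this j, Finset.sum_const, Finset.card_range,
    nsmul_eq_mul]

lemma pih_umn (m2 n1 : ℕ) :
    pih p (umn p 0 m2 n1 0) = -((n1 : ZMod p) * (m2 : ZMod p)) := by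
  rw [umn]
  rw [map_add, pih_smul_u12, pih_smul_u12]
  rw [map_neg, aug_of_pow_mul_sum]
  simp

end Pih
section C12val

set_option linter.unusedSectionVars false

variable {p : ℕ} [NeZero p]

lemma pih_c12 (x y : G12t p) :
    pih p (c12coc p x y)
      = -(((Multiplicative.toAdd y).1 : ZMod p) * ((Multiplicative.toAdd x).2 : ZMod p)) := by
  rw [c12coc]
  rw [map_add, map_add, pih_of_smul, map_nsmul, map_nsmul, pih_b1e, pih_b2e_smul, pih_umn]
  rw [smul_zero, smul_zero, add_zero, add_zero]
  rw [ZMod.natCast_rightInverse _, ZMod.natCast_rightInverse _]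

lemma zmodTwoNeZero (hp : p.Prime) (hodd : p ≠ 2) : (2 : ZMod p) ≠ 0 := by
  intro h
  rw [show ((2 : ZMod p)) = ((2 : ℕ) : ZMod p) by norm_num,
    ZMod.natCast_eq_zero_iff] at h
  exact hodd ((Nat.prime_dvd_prime_iff_eq hp Nat.prime_two).mp h)

lemma sum_e1_subgroup (hp : p.Prime) (hodd : p ≠ 2) (S : Subgroup (G12t p)) [Fintype ↥S] :
    ∑ h : ↥S, (((Multiplicative.toAdd (h : G12t p)).1 : ZMod p)) = 0 := by
  haveI := Fact.mk hp
  have hsym : ∑ h : ↥S, ((Multiplicative.toAdd (h : G12t p)).1 : ZMod p)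
      = ∑ h : ↥S, ((Multiplicative.toAdd ((h⁻¹ : ↥S) : G12t p)).1 : ZMod p) :=
    (Fintype.sum_equiv (Equiv.inv ↥S) _ _ fun h => rfl).symm
  have hneg : ∀ h : ↥S, ((Multiplicative.toAdd ((h⁻¹ : ↥S) : G12t p)).1 : ZMod p)
      = -((Multiplicative.toAdd (h : G12t p)).1 : ZMod p) := by
    intro h
    have h1 : ((h⁻¹ : ↥S) : G12t p) = ((h : G12t p))⁻¹ := rfl
    rw [h1, toAdd_inv, Prod.fst_neg]
  rw [Finset.sum_congr rfl fun h _ => hneg h, Finset.sum_neg_distrib] at hsym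
  have h2 : (2 : ZMod p) * ∑ h : ↥S, ((Multiplicative.toAdd (h : G12t p)).1 : ZMod p) = 0 := by
    rw [two_mul]
    nth_rewrite 1 [hsym]
    ring
  rcases mul_eq_zero.mp h2 with h | h
  · exact absurd h (zmodTwoNeZero hp hodd)
  · exact h

lemma pih_vH (hp : p.Prime) (hodd : p ≠ 2) (H : Subgroup (Gp p)) (x : G12t p) :
    pih p (vH p H x) = 0 := by
  haveI : Fintype ↥(H.map (π12 p)) := Fintype.ofFinite _
  rw [vH, finsum_eq_sum_of_fintype, map_sum]
  simp only [pih_c12]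
  rw [Finset.sum_neg_distrib, ← Finset.sum_mul, sum_e1_subgroup hp hodd, zero_mul, neg_zero]

end C12val
section NOrd

set_option linter.unusedSectionVars false

variable {p : ℕ} [NeZero p]

lemma s3_pow_p (p : ℕ) [NeZero p] : (s3 p) ^ p = 1 := by
  refine ofAdd_pow_p p _ ?_
  show p • ((0, 0, 1, 0) : ZMod p × ZMod p × ZMod p × ZMod p) = 0
  simp [Prod.smul_mk, zmod_p_smul]

lemma s3_mem_of_HH {H : Subgroup (Gp p)} (hH : H ∈ HH p) : s3 p ∈ H := by
  rcases Set.mem_insert_iff.mp hH with rfl | ⟨τ, hτ, rfl⟩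
  · exact Subgroup.mem_top _
  · exact Subgroup.subset_closure (by simp)

lemma c1g_pow_toAdd (k : ℕ) : Multiplicative.toAdd ((c1g p) ^ k) = (k : ZMod p) := by
  rw [toAdd_pow]
  show k • (1 : ZMod p) = (k : ZMod p)
  rw [nsmul_eq_mul, mul_one]

lemma NN_c1g_apply_one : (NN p (c1g p)).coeff (1 : Cpt p) = 1 := by
  rw [NN]
  have : ∀ k, (of ℤ (Cpt p) (c1g p) ^ k).coeff (1 : Cpt p)
      = (Finsupp.single ((c1g p) ^ k) (1 : ℤ)) (1 : Cpt p) := by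
    intro k; rw [← map_pow]; rfl
  rw [MonoidAlgebra.coeff_sum, Finset.sum_apply']
  rw [Finset.sum_congr rfl fun k _ => this k]
  rw [Finset.sum_eq_single 0]
  · rw [pow_zero, Finsupp.single_eq_same]
  · intro k hk hk0
    refine Finsupp.single_eq_of_ne fun hc => ?_
    have : (k : ZMod p) = 0 := by
      have := congrArg Multiplicative.toAdd hc
      rw [c1g_pow_toAdd] at this
      simpa using this.symm
    rw [ZMod.natCast_eq_zero_iff] at this
    exact hk0 (Nat.eq_zero_of_dvd_of_lt this (Finset.mem_range.mp hk))
  · intro h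
    exact absurd (Finset.mem_range.mpr (Nat.pos_of_ne_zero (NeZero.ne p))) h

lemma p_dvd_of_coboundary (hp : p.Prime) (H : Subgroup (Gp p)) (hs3 : s3 p ∈ H) (n : ℕ)
    (hcb : IsTwoCoboundary (resAct H (actQ p)) fun h h' => n • ωc p (h : Gp p) (h' : Gp p)) :
    p ∣ n := by
  haveI : Fact (1 < p) := Fact.mk hp.one_lt
  obtain ⟨c, hc⟩ := hcb
  set f : ℕ → ↥(A2C p) := fun a => (c ⟨s3 p ^ a, pow_mem hs3 a⟩).2.1.1 with hf
  have key : ∀ a : ℕ,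
      n • (-(ccyc p (π3 p (s3 p ^ a)) (π3 p (s3 p))))
        = of ℤ (Cpt p) (π3 p (s3 p ^ a)) • f 1 - f (a + 1) + f a := by
    intro a
    have h0 := hc ⟨s3 p ^ a, pow_mem hs3 a⟩ ⟨s3 p, hs3⟩
    have h1 : (⟨s3 p ^ a, pow_mem hs3 a⟩ * ⟨s3 p, hs3⟩ : ↥H)
        = ⟨s3 p ^ (a + 1), pow_mem hs3 (a + 1)⟩ := Subtype.ext (pow_succ _ _).symm
    rw [h1] at h0
    have h2 := congrArg (fun q : Qc p => q.2.1.1) h0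
    simp only [resAct, actQ, ωc, Prod.smul_snd, Prod.smul_fst, Prod.fst_sub, Prod.snd_sub,
      Prod.fst_add, Prod.snd_add] at h2
    have hb : (⟨s3 p, hs3⟩ : ↥H) = ⟨s3 p ^ 1, pow_mem hs3 1⟩ := Subtype.ext (pow_one _).symm
    rw [hb] at h2
    exact h2
  have hccyc : ∀ a : ℕ, a < p →
      ccyc p (π3 p (s3 p ^ a)) (π3 p (s3 p)) = if a = p - 1 then NCe p else 0 := by
    intro a ha
    have hπ : π3 p (s3 p ^ a) = (c1g p) ^ a := by
      rw [map_pow]; rfl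
    have hπ1 : π3 p (s3 p) = c1g p := rfl
    rw [ccyc, hπ, hπ1, c1g_pow_toAdd]
    have hval : ((a : ZMod p)).val = a := by
      rw [ZMod.val_natCast, Nat.mod_eq_of_lt ha]
    have hval1 : (Multiplicative.toAdd (c1g p)).val = 1 := by
      show (1 : ZMod p).val = 1
      exact ZMod.val_one p
    rw [hval, hval1]
    by_cases hcase : a = p - 1
    · rw [if_pos (show p ≤ a + 1 by omega), if_pos hcase]
    · rw [if_neg (show ¬ p ≤ a + 1 by omega), if_neg hcase]
  have hsum := Finset.sum_congr rfl fun a (ha : a ∈ Finset.range p) => key a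
  have hL : ∑ a ∈ Finset.range p, n • (-(ccyc p (π3 p (s3 p ^ a)) (π3 p (s3 p))))
      = -(n • NCe p) := by
    rw [Finset.sum_congr rfl fun a ha => by
      rw [hccyc a (Finset.mem_range.mp ha)]]
    have : ∀ a : ℕ, n • (-(if a = p - 1 then NCe p else 0))
        = if a = p - 1 then -(n • NCe p) else 0 := by
      intro a; split <;> simp
    rw [Finset.sum_congr rfl fun a _ => this a, Finset.sum_ite_eq']
    rw [if_pos (Finset.mem_range.mpr (by have := hp.one_lt; omega))]
  have hR : ∑ a ∈ Finset.range p, (of ℤ (Cpt p) (π3 p (s3 p ^ a)) • f 1 - f (a + 1) + f a)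
      = NN p (c1g p) • f 1 := by
    have hπ : ∀ a : ℕ, of ℤ (Cpt p) (π3 p (s3 p ^ a)) = of ℤ (Cpt p) (c1g p) ^ a := by
      intro a
      rw [show π3 p (s3 p ^ a) = (c1g p) ^ a by rw [map_pow]; rfl, map_pow]
    simp only [hπ]
    have : ∀ a : ℕ, of ℤ (Cpt p) (c1g p) ^ a • f 1 - f (a + 1) + f a
        = of ℤ (Cpt p) (c1g p) ^ a • f 1 + (f a - f (a + 1)) := by intro a; abel
    rw [Finset.sum_congr rfl fun a _ => this a, Finset.sum_add_distrib,
      Finset.sum_range_sub' f, ← Finset.sum_smul, ← NN]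
    have heq : (⟨s3 p ^ p, pow_mem hs3 p⟩ : ↥H) = ⟨s3 p ^ 0, pow_mem hs3 0⟩ :=
      Subtype.ext (by show s3 p ^ p = s3 p ^ 0; rw [s3_pow_p, pow_zero])
    have hfp : f p = f 0 := by
      show (c ⟨s3 p ^ p, pow_mem hs3 p⟩).2.1.1 = (c ⟨s3 p ^ 0, pow_mem hs3 0⟩).2.1.1
      rw [heq]
    rw [hfp]
    simp
  rw [hsum, hR] at hL
  -- now hL : NN p (c1g p) • f 1 = -(n • NCe p)
  have hval := congrArg (fun z : ↥(A2C p) => (z : RCp p).coeff (1 : Cpt p)) hL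
  have hx : ((f 1 : ↥(A2C p)) : RCp p) * of ℤ (Cpt p) (c1g p) = ((f 1 : ↥(A2C p)) : RCp p) := by
    have h := (f 1).2
    simp only [A2C, LinearMap.mem_ker, dcmap, LinearMap.toSpanSingleton_apply,
      smul_eq_mul] at h
    have h2 : ((f 1 : ↥(A2C p)) : RCp p) * of ℤ (Cpt p) (c1g p)
        - ((f 1 : ↥(A2C p)) : RCp p) = 0 := by rw [← h]; ring
    exact sub_eq_zero.mp h2
  have hshift : ∀ g : Cpt p, ((f 1 : ↥(A2C p)) : RCp p).coeff (g * (c1g p)⁻¹)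
      = ((f 1 : ↥(A2C p)) : RCp p).coeff g := by
    intro g
    have := congrArg (fun z : RCp p => z.coeff g) hx
    simpa [MonoidAlgebra.coeff_mul_single_apply] using this
  have hconst : ∀ k : ℕ, ((f 1 : ↥(A2C p)) : RCp p).coeff (((c1g p)⁻¹) ^ k)
      = ((f 1 : ↥(A2C p)) : RCp p).coeff 1 := by
    intro k
    induction k with
    | zero => rw [pow_zero]
    | succ k ih => rw [pow_succ, hshift, ih]
  have hL1 : (((NN p (c1g p) • f 1 : ↥(A2C p)) : RCp p)).coeff (1 : Cpt p)
      = (p : ℤ) * ((f 1 : ↥(A2C p)) : RCp p).coeff 1 := by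
    have hcoe : ((NN p (c1g p) • f 1 : ↥(A2C p)) : RCp p)
        = NN p (c1g p) * ((f 1 : ↥(A2C p)) : RCp p) := rfl
    rw [hcoe, NN, Finset.sum_mul, MonoidAlgebra.coeff_sum, Finset.sum_apply']
    have : ∀ k : ℕ, (of ℤ (Cpt p) (c1g p) ^ k * ((f 1 : ↥(A2C p)) : RCp p)).coeff (1 : Cpt p)
        = ((f 1 : ↥(A2C p)) : RCp p).coeff 1 := by
      intro k
      rw [← map_pow, MonoidAlgebra.of_apply, MonoidAlgebra.coeff_single_mul_apply, one_mul,
        mul_one, ← inv_pow, hconst]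
    rw [Finset.sum_congr rfl fun k _ => this k, Finset.sum_const, Finset.card_range,
      nsmul_eq_mul]
  have hR1 : ((-(n • NCe p) : ↥(A2C p)) : RCp p).coeff (1 : Cpt p) = -(n : ℤ) := by
    have hcoe : ((-(n • NCe p) : ↥(A2C p)) : RCp p) = -((n : ℤ) • NN p (c1g p)) := by
      push_cast [NCe]
      rfl
    rw [hcoe]
    rw [MonoidAlgebra.coeff_neg, Finsupp.neg_apply, MonoidAlgebra.coeff_smul, Finsupp.smul_apply, NN_c1g_apply_one]
    simp
  rw [hL1, hR1] at hval
  have : (p : ℤ) ∣ (n : ℤ) := ⟨-((f 1 : ↥(A2C p)) : RCp p).coeff 1, by linarith [hval]⟩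
  exact_mod_cast this

lemma p_dvd_nOrd (hp : p.Prime) (H : Subgroup (Gp p)) (hs3 : s3 p ∈ H) : p ∣ nOrd p H := by
  rw [nOrd]
  by_cases hne : {n : ℕ | 0 < n ∧
      IsTwoCoboundary (resAct H (actQ p)) fun h h' => n • ωc p (h : Gp p) (h' : Gp p)}.Nonempty
  · obtain ⟨-, hcb⟩ := Nat.sInf_mem hne
    exact p_dvd_of_coboundary hp H hs3 _ hcb
  · rw [Set.not_nonempty_iff_eq_empty] at hne
    rw [hne, Nat.sInf_empty]
    exact dvd_zero p

end NOrd
section GpSide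

set_option linter.unusedSectionVars false

variable {p : ℕ} [NeZero p]

/-- first exponent functional on `G`. -/
def e1G (p : ℕ) : Gp p → ZMod p := fun g => (Multiplicative.toAdd g).1
/-- second exponent functional on `G₁₂`, pulled back to `G`. -/
def e2G (p : ℕ) : Gp p → ZMod p := fun g => (Multiplicative.toAdd g).2.1

lemma e1G_mul (a b : Gp p) : e1G p (a * b) = e1G p a + e1G p b := rfl

lemma e1f_pi12 (g : Gp p) : e1f p (π12 p g) = e1G p g := rfl
lemma e2f_pi12 (g : Gp p) : e2f p (π12 p g) = e2G p g := rfl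

lemma HH_finite (p : ℕ) [NeZero p] : (HH p).Finite := by
  have h1 : {H : Subgroup (Gp p) | ∃ τ ∈ G12sub p, H = Subgroup.closure {τ, s3 p, s4 p}}
      ⊆ (fun τ : Gp p => Subgroup.closure {τ, s3 p, s4 p}) '' Set.univ := by
    rintro H ⟨τ, -, rfl⟩
    exact ⟨τ, trivial, rfl⟩
  exact Set.Finite.insert ⊤ ((Set.finite_univ.image _).subset h1)

lemma pi12_one_of_G34 {g : Gp p} (hg : g ∈ G34sub p) : π12 p g = 1 := by
  have hker : G34sub p ≤ (π12 p).ker := by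
    rw [G34sub, Subgroup.closure_le]
    rintro x (rfl | rfl) <;> rfl
  exact hker hg

lemma smul_coset_eq {H : Subgroup (Gp p)} {s : Gp p} (hs : s ∈ H) (c : Gp p ⧸ H) :
    s • c = c := by
  obtain ⟨g, rfl⟩ := QuotientGroup.mk_surjective c
  rw [MulAction.Quotient.smul_mk]
  refine (QuotientGroup.eq).mpr ?_
  have h1 : (s * g)⁻¹ * g = s⁻¹ := by
    rw [mul_inv_rev, mul_comm g⁻¹ s⁻¹, mul_assoc, inv_mul_cancel, mul_one]
  rw [smul_eq_mul, h1]
  exact inv_mem hs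

lemma s3_pow_ofAdd (k : ℕ) :
    s3 p ^ k = Multiplicative.ofAdd ((0 : ZMod p), (0 : ZMod p), (k : ZMod p), (0 : ZMod p)) := by
  apply Multiplicative.toAdd.injective
  rw [toAdd_pow]
  show k • ((0, 0, 1, 0) : ZMod p × ZMod p × ZMod p × ZMod p) = _
  simp [nsmul_eq_mul]

lemma orbit_sum_zero (v : RG p) (hv : of ℤ (Gp p) (s3 p) * v = v) :
    LF p (Gp p) (e1G p) v = 0 := by
  have hshift : ∀ g : Gp p, v.coeff (s3 p * g) = v.coeff g := by
    intro g
    have h1 := congrArg (fun z : RG p => z.coeff (s3 p * g)) hv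
    rw [MonoidAlgebra.of_apply, MonoidAlgebra.coeff_single_mul_apply, one_mul,
      inv_mul_cancel_left] at h1
    exact h1.symm
  have hpow : ∀ (k : ℕ) (g : Gp p), v.coeff (s3 p ^ k * g) = v.coeff g := by
    intro k
    induction k with
    | zero => intro g; rw [pow_zero, one_mul]
    | succ k ih => intro g; rw [pow_succ, mul_comm (s3 p ^ k) (s3 p), mul_assoc, hshift, ih]
  have hconst : ∀ a b t d : ZMod p,
      v.coeff (Multiplicative.ofAdd (a, b, t, d)) = v.coeff (Multiplicative.ofAdd (a, b, 0, d)) := by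
    intro a b t d
    have h1 : Multiplicative.ofAdd ((a, b, t, d) : ZMod p × ZMod p × ZMod p × ZMod p)
        = s3 p ^ t.val * Multiplicative.ofAdd ((a, b, 0, d)
            : ZMod p × ZMod p × ZMod p × ZMod p) := by
      rw [s3_pow_ofAdd, ZMod.natCast_rightInverse t, ← ofAdd_add]
      congr 1
      simp
    rw [h1, hpow]
  rw [LF_apply]
  have hsum : ∑ g : Gp p, ((v.coeff g : ZMod p) * e1G p g)
      = ∑ x : ZMod p × ZMod p × ZMod p × ZMod p,
          ((v.coeff (Multiplicative.ofAdd x) : ZMod p) * x.1) :=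
    (Fintype.sum_equiv Multiplicative.ofAdd _ _ fun x => rfl).symm
  rw [hsum, Fintype.sum_prod_type]
  refine Finset.sum_eq_zero fun a _ => ?_
  rw [Fintype.sum_prod_type]
  refine Finset.sum_eq_zero fun b _ => ?_
  rw [Fintype.sum_prod_type]
  have h2 : (∑ t : ZMod p, ∑ d : ZMod p,
        ((v.coeff (Multiplicative.ofAdd (a, b, t, d)) : ZMod p) * a))
      = ∑ t : ZMod p, ∑ d : ZMod p,
        ((v.coeff (Multiplicative.ofAdd (a, b, 0, d)) : ZMod p) * a) :=
    Finset.sum_congr rfl fun t _ => Finset.sum_congr rfl fun d _ => by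
      rw [hconst a b t d]
  rw [h2, Finset.sum_const, Finset.card_univ, ZMod.card, nsmul_eq_mul, ZMod.natCast_self,
    zero_mul]

end GpSide
section Theta

set_option linter.unusedSectionVars false

variable {p : ℕ} [NeZero p]

lemma coe_nsmul_IG (n : ℕ) (x : ↥(IG p)) : ((n • x : ↥(IG p)) : RG p) = n • (x : RG p) := by
  exact map_nsmul ((IG p).subtype.toAddMonoidHom) n x

lemma pih_c12' (g g' : Gp p) :
    pih p (c12coc p (π12 p g) (π12 p g')) = -(e1G p g' * e2G p g) :=
  pih_c12 _ _

lemma theta_pih (g : Gp p) (x : RG p) :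
    pih p (θω p g x).1
      = ∑ g' : Gp p, (x.coeff g' : ZMod p) * pih p (c12coc p (π12 p g) (π12 p g')) := by
  have h1 : (θω p g x).1
      = ∑ g' ∈ x.coeff.support, (x.coeff g') • (c12coc p (π12 p g) (π12 p g')) := by
    rw [θω, Finsupp.sum, Prod.fst_sum]
    refine Finset.sum_congr rfl fun g' _ => ?_
    rw [Prod.smul_fst]
    rfl
  rw [h1, map_sum]
  have h2 : ∀ g', pih p ((x.coeff g') • (c12coc p (π12 p g) (π12 p g')))
      = (x.coeff g' : ZMod p) * pih p (c12coc p (π12 p g) (π12 p g')) := fun g' => by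
    rw [map_zsmul, zsmul_eq_mul]
  rw [Finset.sum_congr rfl fun g' _ => h2 g']
  refine Finset.sum_subset (Finset.subset_univ _) fun g' _ hg' => ?_
  rw [Finsupp.notMem_support_iff.mp hg', Int.cast_zero, zero_mul]

lemma theta_pih_val (g : Gp p) (x : RG p) :
    pih p (θω p g x).1 = -(e2G p g) * LF p (Gp p) (e1G p) x := by
  rw [theta_pih, LF_apply, Finset.mul_sum]
  refine Finset.sum_congr rfl fun g' _ => ?_
  rw [pih_c12']
  ring

lemma LF_nsmul_dvd {n : ℕ} (hdvd : p ∣ n) (F : Gp p → ZMod p) (x : RG p) :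
    LF p (Gp p) F (n • x) = 0 := by
  rw [map_nsmul, nsmul_eq_mul, (ZMod.natCast_eq_zero_iff n p).mpr hdvd, zero_mul]

lemma pih_actM_fH_zero (hp : p.Prime) (hodd : p ≠ 2) (H : Subgroup (Gp p)) (hs3 : s3 p ∈ H)
    (zh : ↥H → Kc p × Kc p) (g₀ : Gp p) (h : ↥H) :
    pih p ((actM p g₀ (fHof p H zh h)).1.1) = 0 := by
  show pih p (of ℤ (G12t p) (π12 p g₀) • (-(vH p H (π12 p (h : Gp p))))
      + (θω p g₀ ((nOrd p H • dH p H h : ↥(IG p)) : RG p)).1) = 0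
  rw [map_add, pih_of_smul, map_neg, pih_vH hp hodd, neg_zero, zero_add, coe_nsmul_IG,
    theta_pih_val, LF_nsmul_dvd (p_dvd_nOrd hp H hs3), mul_zero]

end Theta
section Assembly

set_option linter.unusedSectionVars false

variable {p : ℕ} [NeZero p]

lemma out_mem_aux (H : Subgroup (Gp p)) (g : Gp p) (c : Gp p ⧸ H) :
    (Quotient.out (g • c))⁻¹ * (g * Quotient.out c) ∈ H := by
  rw [← QuotientGroup.eq, QuotientGroup.out_eq', ← smul_eq_mul,
    MulAction.Quotient.mk_smul_out]

/-- the `A₂`-component projection of `M_ω` as an additive homomorphism. -/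
def McA2h (p : ℕ) [NeZero p] : Mc p →+ ↥(A2G12 p) :=
  (AddMonoidHom.fst (↥(A2G12 p)) (Kc p × Kc p)).comp (AddMonoidHom.fst (Qc p) (↥(IG p)))

/-- the `I[G]`-component projection of `M_ω` as an additive homomorphism. -/
def McIGh (p : ℕ) [NeZero p] : Mc p →+ RG p :=
  ((IG p).subtype.toAddMonoidHom).comp (AddMonoidHom.snd (Qc p) (↥(IG p)))

lemma L1_y_zero (hp : p.Prime) (m : MC p)
    (F : ∀ H : ↥(HH p), ↥(H : Subgroup (Gp p)) → Mc p)
    (hF : ∀ (H : ↥(HH p)) (h : ↥((H : Subgroup (Gp p)))),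
      (F H h).2 = nOrd p (H : Subgroup (Gp p)) • dH p (H : Subgroup (Gp p)) h)
    (hfix : actMFull p F (s3 p) m = m) :
    LF p (Gp p) (e1G p) ((m.1.2 : RG p)) = 0 := by
  haveI : Finite ↥(HH p) := (HH_finite p).to_subtype
  set y : RG p := (m.1.2 : RG p) with hy
  set w : RG p := ∑ᶠ H : ↥(HH p), Finsupp.sum (m.2 H) (fun c a =>
      a • ((nOrd p (H : Subgroup (Gp p))) • of ℤ (Gp p) (Quotient.out c))) with hw
  have h0 : (actMFull p F (s3 p) m).1 = actM p (s3 p) m.1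
      + ∑ᶠ H : ↥(HH p), Finsupp.sum (m.2 H) (fun c a =>
          a • actM p (Quotient.out (s3 p • c))
            (F H ⟨(Quotient.out (s3 p • c))⁻¹ * (s3 p * Quotient.out c),
              out_mem_aux _ _ _⟩)) := rfl
  have hIG := congrArg (fun x : Mc p => ((x.2 : RG p))) (congrArg Prod.fst hfix)
  rw [h0] at hIG
  have hL : (((actM p (s3 p) m.1
      + ∑ᶠ H : ↥(HH p), Finsupp.sum (m.2 H) (fun c a =>
          a • actM p (Quotient.out (s3 p • c))
            (F H ⟨(Quotient.out (s3 p • c))⁻¹ * (s3 p * Quotient.out c),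
              out_mem_aux _ _ _⟩))).2 : RG p))
      = of ℤ (Gp p) (s3 p) * y + (of ℤ (Gp p) (s3 p) - 1) * w := by
    have hcoe : ∀ x : Mc p, (x.2 : RG p) = McIGh p x := fun _ => rfl
    rw [hcoe, map_add, AddMonoidHom.map_finsum _ (Set.toFinite _)]
    congr 1
    rw [hw]
    show _ = (AddMonoidHom.mulLeft (of ℤ (Gp p) (s3 p) - 1))
      (∑ᶠ H : ↥(HH p), Finsupp.sum (m.2 H) (fun c a =>
        a • ((nOrd p (H : Subgroup (Gp p))) • of ℤ (Gp p) (Quotient.out c))))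
    rw [AddMonoidHom.map_finsum _ (Set.toFinite _)]
    refine finsum_congr fun H => ?_
    rw [map_finsuppSum]
    show _ = (of ℤ (Gp p) (s3 p) - 1) * Finsupp.sum (m.2 H) (fun c a =>
        a • ((nOrd p (H : Subgroup (Gp p))) • of ℤ (Gp p) (Quotient.out c)))
    rw [Finsupp.mul_sum]
    refine Finsupp.sum_congr fun c _ => ?_
    rw [map_zsmul]
    set xx : ↥((H : Subgroup (Gp p))) :=
      ⟨(Quotient.out (s3 p • c))⁻¹ * (s3 p * Quotient.out c), out_mem_aux _ _ _⟩ with hxx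
    have h1 : McIGh p (actM p (Quotient.out (s3 p • c)) (F H xx))
        = of ℤ (Gp p) (Quotient.out (s3 p • c))
          * ((nOrd p (H : Subgroup (Gp p))) • (of ℤ (Gp p) ((xx : Gp p)) - 1)) := by
      show ((actIG p (Quotient.out (s3 p • c)) ((F H xx).2) : ↥(IG p)) : RG p) = _
      rw [hF H xx]
      show of ℤ (Gp p) (Quotient.out (s3 p • c))
          * ((nOrd p (H : Subgroup (Gp p)) • dH p (H : Subgroup (Gp p)) xx : ↥(IG p)) : RG p)
          = _
      rw [coe_nsmul_IG]
      rfl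
    rw [h1]
    have hsc : s3 p • c = c := smul_coset_eq (s3_mem_of_HH H.2) c
    have hxval : ((xx : Gp p)) = s3 p := by
      show (Quotient.out (s3 p • c))⁻¹ * (s3 p * Quotient.out c) = s3 p
      rw [hsc, mul_comm (s3 p) (Quotient.out c), inv_mul_cancel_left]
    rw [hxval, hsc, zsmul_eq_mul, zsmul_eq_mul, nsmul_eq_mul, nsmul_eq_mul]
    ring
  rw [hL] at hIG
  have hinv : of ℤ (Gp p) (s3 p) * (y + w) = y + w := by linear_combination hIG
  have h1 := orbit_sum_zero (y + w) hinv
  have h2 : LF p (Gp p) (e1G p) w = 0 := by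
    rw [hw, AddMonoidHom.map_finsum _ (Set.toFinite _)]
    have hz : ∀ H : ↥(HH p), LF p (Gp p) (e1G p) (Finsupp.sum (m.2 H) (fun c a =>
        a • ((nOrd p (H : Subgroup (Gp p))) • of ℤ (Gp p) (Quotient.out c)))) = 0 := by
      intro H
      rw [map_finsuppSum]
      have hcz : ∀ c ∈ (m.2 H).support,
          LF p (Gp p) (e1G p) ((m.2 H c) • ((nOrd p (H : Subgroup (Gp p)))
            • of ℤ (Gp p) (Quotient.out c))) = (fun _ _ => (0 : ZMod p)) c (m.2 H c) := by
        intro c _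
        rw [map_zsmul, LF_nsmul_dvd (p_dvd_nOrd hp _ (s3_mem_of_HH H.2)), smul_zero]
      rw [Finsupp.sum_congr (g2 := fun _ _ => (0 : ZMod p)) hcz, Finsupp.sum_fun_zero]
    rw [finsum_congr hz, finsum_zero]
  rw [map_add, h2, add_zero] at h1
  exact h1

lemma pih_finsum_part_zero (hp : p.Prime) (hodd : p ≠ 2)
    (zH : ∀ H : ↥(HH p), (↥((H : Subgroup (Gp p))) → Kc p × Kc p))
    (g : Gp p) (m : MC p) :
    pih p ((∑ᶠ H : ↥(HH p), Finsupp.sum (m.2 H) (fun c a =>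
      a • actM p (Quotient.out (g • c))
        (fHof p (H : Subgroup (Gp p)) (zH H)
          ⟨(Quotient.out (g • c))⁻¹ * (g * Quotient.out c), out_mem_aux _ _ _⟩)) : Mc p).1.1)
      = 0 := by
  haveI : Finite ↥(HH p) := (HH_finite p).to_subtype
  have hcoe : pih p ((∑ᶠ H : ↥(HH p), Finsupp.sum (m.2 H) (fun c a =>
      a • actM p (Quotient.out (g • c))
        (fHof p (H : Subgroup (Gp p)) (zH H)
          ⟨(Quotient.out (g • c))⁻¹ * (g * Quotient.out c), out_mem_aux _ _ _⟩)) : Mc p).1.1)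
      = ((pih p).comp (McA2h p)) (∑ᶠ H : ↥(HH p), Finsupp.sum (m.2 H) (fun c a =>
      a • actM p (Quotient.out (g • c))
        (fHof p (H : Subgroup (Gp p)) (zH H)
          ⟨(Quotient.out (g • c))⁻¹ * (g * Quotient.out c), out_mem_aux _ _ _⟩))) := rfl
  rw [hcoe, AddMonoidHom.map_finsum _ (Set.toFinite _)]
  have hz : ∀ H : ↥(HH p), ((pih p).comp (McA2h p)) (Finsupp.sum (m.2 H) (fun c a =>
      a • actM p (Quotient.out (g • c))
        (fHof p (H : Subgroup (Gp p)) (zH H)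
          ⟨(Quotient.out (g • c))⁻¹ * (g * Quotient.out c), out_mem_aux _ _ _⟩))) = 0 := by
    intro H
    rw [map_finsuppSum]
    have hcz : ∀ c ∈ (m.2 H).support,
        ((pih p).comp (McA2h p)) ((m.2 H c) • actM p (Quotient.out (g • c))
          (fHof p (H : Subgroup (Gp p)) (zH H)
            ⟨(Quotient.out (g • c))⁻¹ * (g * Quotient.out c), out_mem_aux _ _ _⟩))
          = (fun _ _ => (0 : ZMod p)) c (m.2 H c) := by
      intro c _
      rw [map_zsmul]
      have hterm := pih_actM_fH_zero hp hodd (H : Subgroup (Gp p)) (s3_mem_of_HH H.2)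
        (zH H) (Quotient.out (g • c))
        ⟨(Quotient.out (g • c))⁻¹ * (g * Quotient.out c), out_mem_aux _ _ _⟩
      have : ((pih p).comp (McA2h p)) (actM p (Quotient.out (g • c))
          (fHof p (H : Subgroup (Gp p)) (zH H)
            ⟨(Quotient.out (g • c))⁻¹ * (g * Quotient.out c), out_mem_aux _ _ _⟩))
          = pih p ((actM p (Quotient.out (g • c))
          (fHof p (H : Subgroup (Gp p)) (zH H)
            ⟨(Quotient.out (g • c))⁻¹ * (g * Quotient.out c), out_mem_aux _ _ _⟩)).1.1) := rfl
      rw [this, hterm, smul_zero]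
    rw [Finsupp.sum_congr (g2 := fun _ _ => (0 : ZMod p)) hcz, Finsupp.sum_fun_zero]
  rw [finsum_congr hz, finsum_zero]

end Assembly
theorem statement15 (p : ℕ) [NeZero p] (hp : p.Prime) (hodd : p ≠ 2)
    (zH : ∀ H : ↥(HH p), (↥(H.val) → Kc p × Kc p))
    (hz : ∀ H : ↥(HH p), IsOneCocycle (resAct H.val (actM p)) (fHof p H.val (zH H))) :
    (∀ m m' : MC p,
      (∀ g ∈ G34sub p, actMFull p (fun H => fHof p H.val (zH H)) g m = m) →
      (∀ g ∈ G34sub p, actMFull p (fun H => fHof p H.val (zH H)) g m' = m') →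
      πmap' p (m + m') = πmap' p m + πmap' p m') ∧
    (∀ m : MC p,
      (∀ g ∈ G34sub p, actMFull p (fun H => fHof p H.val (zH H)) g m = m) →
      ∀ g : Gp p, πmap' p (actMFull p (fun H => fHof p H.val (zH H)) g m) = πmap' p m) ∧
    (∀ v : ↥(A2G12 p),
      (∀ g ∈ G34sub p,
        actMFull p (fun H => fHof p H.val (zH H)) g (((v, 0, 0), 0), 0) = (((v, 0, 0), 0), 0)) ∧
      πmap' p ((((v, 0, 0), 0), 0) : MC p) = πmap p v) := by
  haveI : Finite ↥(HH p) := (HH_finite p).to_subtype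
  refine ⟨?_, ?_, ?_⟩
  · intro m m' _ _
    show πmap p ((m + m').1.1.1) = πmap p m.1.1.1 + πmap p m'.1.1.1
    rw [show (m + m').1.1.1 = m.1.1.1 + m'.1.1.1 from rfl, pimap_eq_pih, pimap_eq_pih,
      pimap_eq_pih, map_add]
  · intro m hm g
    have hs3G : s3 p ∈ G34sub p := Subgroup.subset_closure (Set.mem_insert _ _)
    have hL1 : LF p (Gp p) (e1G p) ((m.1.2 : RG p)) = 0 :=
      L1_y_zero hp m (fun H => fHof p H.val (zH H)) (fun H h => rfl) (hm (s3 p) hs3G)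
    show πmap p ((actMFull p (fun H => fHof p H.val (zH H)) g m).1.1.1) = πmap p m.1.1.1
    rw [pimap_eq_pih, pimap_eq_pih]
    have h0 : (actMFull p (fun H => fHof p H.val (zH H)) g m).1.1.1
        = (of ℤ (G12t p) (π12 p g) • m.1.1.1 + (θω p g ((m.1.2 : RG p))).1)
          + ((∑ᶠ H : ↥(HH p), Finsupp.sum (m.2 H) (fun c a =>
              a • actM p (Quotient.out (g • c))
                (fHof p (H : Subgroup (Gp p)) (zH H)
                  ⟨(Quotient.out (g • c))⁻¹ * (g * Quotient.out c),
                    out_mem_aux _ _ _⟩)) : Mc p).1.1) := rfl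
    rw [h0, map_add, map_add, pih_of_smul, theta_pih_val, hL1, mul_zero, add_zero,
      pih_finsum_part_zero hp hodd zH g m, add_zero]
  · intro v
    constructor
    · intro g hg
      have hπ12 : π12 p g = 1 := pi12_one_of_G34 hg
      have hactM : actM p g ((((v, 0, 0) : Qc p), 0) : Mc p) = (((v, 0, 0) : Qc p), 0) := by
        refine Prod.ext ?_ ?_
        · show actQ p g ((v, 0, 0) : Qc p) + θω p g ((0 : ↥(IG p)) : RG p) = ((v, 0, 0) : Qc p)
          rw [ZeroMemClass.coe_zero, θω, MonoidAlgebra.coeff_zero, Finsupp.sum_zero_index, add_zero, actQ, hπ12,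
            map_one]
          simp
        · show actIG p g 0 = 0
          refine Subtype.ext ?_
          show of ℤ (Gp p) g * ((0 : ↥(IG p)) : RG p) = 0
          rw [ZeroMemClass.coe_zero, mul_zero]
      refine Prod.ext ?_ ?_
      · show actM p g ((((v, 0, 0) : Qc p), 0) : Mc p)
            + (∑ᶠ H : ↥(HH p), Finsupp.sum (0 : (Gp p ⧸ (H : Subgroup (Gp p))) →₀ ℤ)
              (fun c a => a • actM p (Quotient.out (g • c))
                (fHof p (H : Subgroup (Gp p)) (zH H)
                  ⟨(Quotient.out (g • c))⁻¹ * (g * Quotient.out c), out_mem_aux _ _ _⟩)))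
            = ((((v, 0, 0) : Qc p), 0) : Mc p)
        simp only [Finsupp.sum_zero_index, finsum_zero, add_zero]
        exact hactM
      · show (fun H : ↥(HH p) => Finsupp.mapDomain (fun c => g • c) ((0 : Pc p) H))
            = (0 : Pc p)
        funext H
        show Finsupp.mapDomain (fun c => g • c) 0 = 0
        exact Finsupp.mapDomain_zero
    · rfl

end
end
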